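/- A connected bipartite graph with no induced 2K₂ and no (induced) C₄ is a double star, i.e., a tree obtained by joining the centers of two stars by an edge. Consequently, every {2K₂, C₄}-avoiding bipartite partition of K_n has at least ⌈n/2⌉ parts, and ⌈n/2⌉ parts suffice: χ'_{{2K₂,C₄}}(n) = ⌈n/2⌉. -/

import Mathlib

open SimpleGraph

/-- The graph `2K₂`: two disjoint edges, on vertices {0,1} and {2,3}. -/
def twoK2 : SimpleGraph (Fin 4) where
  Adj i j := i ≠ j ∧ i.val / 2 = j.val / 2
  symm := ⟨by decide⟩
  loopless := ⟨by decide⟩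

/-- The path `P₃` on 3 vertices. -/
def pathP3 : SimpleGraph (Fin 3) where
  Adj i j := i.val + 1 = j.val ∨ j.val + 1 = i.val
  symm := ⟨by decide⟩
  loopless := ⟨by decide⟩

/-- The path `P₄` on 4 vertices. -/
def pathP4 : SimpleGraph (Fin 4) where
  Adj i j := i.val + 1 = j.val ∨ j.val + 1 = i.val
  symm := ⟨by decide⟩
  loopless := ⟨by decide⟩

/-- The cycle `C₄` on 4 vertices. -/
def cycleC4 : SimpleGraph (Fin 4) where
  Adj i j := (i.val + 1) % 4 = j.val ∨ (j.val + 1) % 4 = i.val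
  symm := ⟨by decide⟩
  loopless := ⟨by decide⟩

/-- The star `S₄ = K_{1,3}` on 4 vertices, with center 0. -/
def starS4 : SimpleGraph (Fin 4) where
  Adj i j := i ≠ j ∧ (i = 0 ∨ j = 0)
  symm := ⟨by decide⟩
  loopless := ⟨by decide⟩

/-- The graph `K₂ + K₁`: an edge plus an isolated vertex. -/
def K2plusK1 : SimpleGraph (Fin 3) where
  Adj i j := (i = 0 ∧ j = 1) ∨ (i = 1 ∧ j = 0)
  symm := ⟨by decide⟩
  loopless := ⟨by decide⟩

/-- `G` avoids `H`: `H` is not an induced subgraph of `G` restricted to its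
support (the vertices incident to an edge), matching the convention that
template graphs have no isolated vertices. -/
def Avoids {α β : Type} (G : SimpleGraph α) (H : SimpleGraph β) : Prop :=
  IsEmpty (H ↪g (G.induce G.support))

/-- `P` is a partition of the edge set of the complete graph `K_n` into
bipartite graphs: every template is 2-colorable, and every edge of `K_n`
belongs to exactly one template. -/
def IsBipartitePartition (n k : ℕ) (P : Fin k → SimpleGraph (Fin n)) : Prop :=
  (∀ i, (P i).Colorable 2) ∧
    ∀ e ∈ (⊤ : SimpleGraph (Fin n)).edgeSet, ∃! i, e ∈ (P i).edgeSet

noncomputable def chiDoubleStar (n : ℕ) : ℕ :=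
  sInf {k | ∃ P : Fin k → SimpleGraph (Fin n),
    IsBipartitePartition n k P ∧ ∀ i, Avoids (P i) twoK2 ∧ Avoids (P i) cycleC4}


/-! ### Auxiliary lemmas -/

section Part1
variable {V : Type} {G : SimpleGraph V} {col : V → Bool}

lemma boolEq {x y z : Bool} (h1 : x ≠ z) (h2 : y ≠ z) : x = y := by
  cases x <;> cases y <;> cases z <;> simp_all

lemma no2K2 (h : IsEmpty (twoK2 ↪g G)) {a b c d : V} (hab : G.Adj a b) (hcd : G.Adj c d)
    (hac : ¬ G.Adj a c) (had : ¬ G.Adj a d) (hbc : ¬ G.Adj b c) (hbd : ¬ G.Adj b d)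
    (nac : a ≠ c) (nad : a ≠ d) (nbc : b ≠ c) (nbd : b ≠ d) : False := by
  have nab : a ≠ b := hab.ne
  have ncd : c ≠ d := hcd.ne
  refine h.false ⟨⟨![a,b,c,d], ?_⟩, ?_⟩
  · intro i j hij
    fin_cases i <;> fin_cases j <;> simp_all
  · have hca : ¬ G.Adj c a := fun h => hac h.symm
    have hda' : ¬ G.Adj d a := fun h => had h.symm
    have hcb : ¬ G.Adj c b := fun h => hbc h.symm
    have hdb : ¬ G.Adj d b := fun h => hbd h.symm
    intro i j
    show G.Adj (![a,b,c,d] i) (![a,b,c,d] j) ↔ _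
    fin_cases i <;> fin_cases j <;>
      simp [twoK2, hab, hcd, hab.symm, hcd.symm, hac, had, hbc, hbd,
        hca, hda', hcb, hdb, G.irrefl] <;> decide

lemma noC4 (h : IsEmpty (cycleC4 ↪g G)) {a b c d : V} (hab : G.Adj a b) (hbc : G.Adj b c)
    (hcd : G.Adj c d) (hda : G.Adj d a)
    (hac : ¬ G.Adj a c) (hbd : ¬ G.Adj b d) (nac : a ≠ c) (nbd : b ≠ d) : False := by
  have nab : a ≠ b := hab.ne
  have ncd : c ≠ d := hcd.ne
  have nbc : b ≠ c := hbc.ne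
  have nad : a ≠ d := fun h => hda.ne h.symm
  refine h.false ⟨⟨![a,b,c,d], ?_⟩, ?_⟩
  · intro i j hij
    fin_cases i <;> fin_cases j <;> simp_all
  · have hca : ¬ G.Adj c a := fun h => hac h.symm
    have hdb : ¬ G.Adj d b := fun h => hbd h.symm
    intro i j
    show G.Adj (![a,b,c,d] i) (![a,b,c,d] j) ↔ _
    fin_cases i <;> fin_cases j <;>
      simp [cycleC4, hab, hbc, hcd, hda, hab.symm, hbc.symm, hcd.symm, hda.symm,
        hac, hbd, hca, hdb, G.irrefl] <;> decide

variable (hcol : ∀ {u v : V}, G.Adj u v → col u ≠ col v)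
  (h2 : IsEmpty (twoK2 ↪g G)) (h4 : IsEmpty (cycleC4 ↪g G))
include hcol h2 h4

lemma key2 {a b c d u v : V} (hab : G.Adj a b) (hcd : G.Adj c d) (hbc : G.Adj b c)
    (nac : a ≠ c) (nad : a ≠ d) (nbd : b ≠ d)
    (huv : G.Adj u v) (hub : G.Adj u b)
    (nub : u ≠ b) (nuc : u ≠ c) (nvb : v ≠ b) (nvc : v ≠ c) : False := by
  have cab := hcol hab
  have ccd := hcol hcd
  have cbc := hcol hbc
  have cac : col a = col c := boolEq cab (fun h => cbc h.symm)
  have cdb : col d = col b := boolEq (fun h => ccd h.symm) (fun h => cbc h)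
  have hnac : ¬ G.Adj a c := fun h => hcol h cac
  have hnbd : ¬ G.Adj b d := fun h => hcol h cdb.symm
  have hnad : ¬ G.Adj a d := fun h => noC4 h4 hab hbc hcd h.symm hnac hnbd nac nbd
  have cua : col u = col a := boolEq (hcol hub) cab
  have cbu : col b ≠ col u := by rw [cua]; exact fun h => cab h.symm
  have cvb : col v = col b := boolEq (Ne.symm (hcol huv)) cbu
  have nva : v ≠ a := fun h => cab (h ▸ cvb : col a = col b)
  have nud : u ≠ d := fun h => ccd ((cua.trans cac).symm ▸ h ▸ rfl : col c = col d)
  by_cases hua : u = a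
  · subst hua
    have nvd : v ≠ d := fun h => hnad (h ▸ huv)
    have : G.Adj v c ∨ G.Adj v d := by
      by_contra hcon
      push_neg at hcon
      exact no2K2 h2 huv hcd hnac hnad hcon.1 hcon.2 nac nad nvc nvd
    rcases this with hvc | hvd
    · exact noC4 h4 hab hbc hvc.symm huv.symm hnac
        (fun h => hcol h cvb.symm) nac (fun h => nvb h.symm)
    · exact hcol hvd (cvb.trans cdb.symm)
  · by_cases hvd : v = d
    · subst hvd
      exact noC4 h4 hbc hcd huv.symm hub hnbd
        (fun h => hcol h ((cua.trans cac).symm ▸ rfl)) nbd (fun h => nuc h.symm)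
    · have : G.Adj u d ∨ G.Adj v c := by
        by_contra hcon
        push_neg at hcon
        have hnuc : ¬ G.Adj u c := fun h => hcol h (cua.trans cac)
        have hnvd : ¬ G.Adj v d := fun h => hcol h (cvb.trans cdb.symm)
        exact no2K2 h2 huv hcd hnuc hcon.1 hcon.2 hnvd nuc nud nvc hvd
      rcases this with hud | hvc
      · exact noC4 h4 hub hbc hcd hud.symm
          (fun h => hcol h (cua.trans cac)) hnbd nuc nbd
      · exact noC4 h4 huv.symm hub hbc hvc.symm
          (fun h => hcol h cvb) (fun h => hcol h (cua.trans cac)) nvb nuc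

lemma key {a b c d : V} (hab : G.Adj a b) (hcd : G.Adj c d) (hbc : G.Adj b c)
    (nac : a ≠ c) (nad : a ≠ d) (nbd : b ≠ d) :
    ∀ u v : V, G.Adj u v → u = b ∨ u = c ∨ v = b ∨ v = c := by
  intro u v huv
  by_contra hcon
  push_neg at hcon
  obtain ⟨nub, nuc, nvb, nvc⟩ := hcon
  have : G.Adj u b ∨ G.Adj u c ∨ G.Adj v b ∨ G.Adj v c := by
    by_contra hc
    push_neg at hc
    exact no2K2 h2 huv hbc hc.1 hc.2.1 hc.2.2.1 hc.2.2.2 nub nuc nvb nvc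
  rcases this with h | h | h | h
  · exact key2 hcol h2 h4 hab hcd hbc nac nad nbd huv h nub nuc nvb nvc
  · exact key2 hcol h2 h4 hcd.symm hab.symm hbc.symm (fun h' => nbd h'.symm)
      (fun h' => nad h'.symm) (fun h' => nac h'.symm) huv h nuc nub nvc nvb
  · exact key2 hcol h2 h4 hab hcd hbc nac nad nbd huv.symm h nvb nvc nub nuc
  · exact key2 hcol h2 h4 hcd.symm hab.symm hbc.symm (fun h' => nbd h'.symm)
      (fun h' => nad h'.symm) (fun h' => nac h'.symm) huv.symm h nvc nvb nuc nub

lemma domEdge {a b : V} (hab : G.Adj a b) :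
    ∃ x y : V, G.Adj x y ∧ ∀ u v : V, G.Adj u v → u = x ∨ u = y ∨ v = x ∨ v = y := by
  by_cases hdom : ∀ u v : V, G.Adj u v → u = a ∨ u = b ∨ v = a ∨ v = b
  · exact ⟨a, b, hab, hdom⟩
  · push_neg at hdom
    obtain ⟨c, d, hcd, nca, ncb, nda, ndb⟩ := hdom
    have : G.Adj a c ∨ G.Adj a d ∨ G.Adj b c ∨ G.Adj b d := by
      by_contra hc
      push_neg at hc
      exact no2K2 h2 hab hcd hc.1 hc.2.1 hc.2.2.1 hc.2.2.2
        (Ne.symm nca) (Ne.symm nda) (Ne.symm ncb) (Ne.symm ndb)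
    rcases this with h | h | h | h
    · exact ⟨a, c, h, key hcol h2 h4 hab.symm hcd h (Ne.symm ncb) (Ne.symm ndb) (Ne.symm nda)⟩
    · exact ⟨a, d, h, key hcol h2 h4 hab.symm hcd.symm h (Ne.symm ndb)
        (Ne.symm ncb) (Ne.symm nca)⟩
    · exact ⟨b, c, h, key hcol h2 h4 hab hcd h (Ne.symm nca) (Ne.symm nda) (Ne.symm ndb)⟩
    · exact ⟨b, d, h, key hcol h2 h4 hab hcd.symm h (Ne.symm nda) (Ne.symm nca) (Ne.symm ncb)⟩

end Part1

/-! ### The double-star construction -/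

def dstar (n k i : ℕ) : SimpleGraph (Fin n) where
  Adj u v := u ≠ v ∧
    ((u.val = i ∧ ¬(i < v.val ∧ v.val < k + i)) ∨ (u.val = k + i ∧ i < v.val ∧ v.val < k + i) ∨
     (v.val = i ∧ ¬(i < u.val ∧ u.val < k + i)) ∨ (v.val = k + i ∧ i < u.val ∧ u.val < k + i))
  symm := ⟨by intro u v ⟨h1, h2⟩; exact ⟨h1.symm, by tauto⟩⟩
  loopless := ⟨fun u h => h.1 rfl⟩

variable {n k i : ℕ}

lemma dstar_ne {u v : Fin n} (h : (dstar n k i).Adj u v) : u.val ≠ v.val :=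
  fun hv => h.1 (Fin.val_injective hv)

lemma dstar_dom {u v : Fin n} (h : (dstar n k i).Adj u v) :
    u.val = i ∨ u.val = k + i ∨ v.val = i ∨ v.val = k + i := by
  obtain ⟨-, h⟩ := h; tauto

lemma dstar_nbr_i (hk : 1 ≤ k) {u v : Fin n} (h : (dstar n k i).Adj u v) (hu : u.val = i) :
    ¬(i < v.val ∧ v.val < k + i) := by
  have := dstar_ne h
  obtain ⟨-, h⟩ := h
  omega

lemma dstar_nbr_ki (hk : 1 ≤ k) {u v : Fin n} (h : (dstar n k i).Adj u v) (hu : u.val = k + i) :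
    (i < v.val ∧ v.val < k + i) ∨ v.val = i := by
  have := dstar_ne h
  obtain ⟨-, h⟩ := h
  omega

lemma dstar_center_adj (hk : 1 ≤ k) {u v : Fin n} (hu : u.val = i) (hv : v.val = k + i) :
    (dstar n k i).Adj u v := by
  refine ⟨fun h => ?_, Or.inl ⟨hu, by omega⟩⟩
  rw [h] at hu; omega

lemma dstar_colorable (hk : 1 ≤ k) : (dstar n k i).Colorable 2 := by
  refine ⟨Coloring.mk (fun v => if i ≤ v.val ∧ v.val < k + i then 0 else 1) ?_⟩
  intro u v h hc
  have hne := dstar_ne h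
  obtain ⟨-, h⟩ := h
  split_ifs at hc <;> omega

/-- which part an edge `{x,y}` of `K_n` (given as vals) belongs to -/
def partFn (k x y : ℕ) : ℕ :=
  if max x y < k then max x y
  else if min x y + k ≤ max x y then min x y
  else max x y - k

lemma dstar_adj_iff (hn : n ≤ 2 * k) (hik : i < k) {u v : Fin n} (h : u.val ≠ v.val) :
    (dstar n k i).Adj u v ↔ i = partFn k u.val v.val := by
  have hu := u.isLt
  have hv := v.isLt
  unfold partFn
  rcases Nat.le_total u.val v.val with hle | hle <;>
    [rw [Nat.max_eq_right hle, Nat.min_eq_left hle];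
     rw [Nat.max_eq_left hle, Nat.min_eq_right hle]] <;>
  constructor
  · rintro ⟨-, hadj⟩; split_ifs <;> omega
  · intro hi
    refine ⟨fun he => h (by rw [he]), ?_⟩
    split_ifs at hi <;> omega
  · rintro ⟨-, hadj⟩; split_ifs <;> omega
  · intro hi
    refine ⟨fun he => h (by rw [he]), ?_⟩
    split_ifs at hi <;> omega

lemma partFn_lt (hn : n ≤ 2 * k) {u v : Fin n} (h : u.val ≠ v.val) :
    partFn k u.val v.val < k := by
  have hu := u.isLt
  have hv := v.isLt
  unfold partFn
  rcases Nat.le_total u.val v.val with hle | hle <;>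
    [rw [Nat.max_eq_right hle, Nat.min_eq_left hle];
     rw [Nat.max_eq_left hle, Nat.min_eq_right hle]] <;>
  split_ifs <;> omega

@[simp] lemma twoK2_adj {a b : Fin 4} : twoK2.Adj a b ↔ a ≠ b ∧ a.val / 2 = b.val / 2 :=
  Iff.rfl

@[simp] lemma cycleC4_adj {a b : Fin 4} :
    cycleC4.Adj a b ↔ (a.val + 1) % 4 = b.val ∨ (b.val + 1) % 4 = a.val := Iff.rfl

lemma dstar_cross (hk : 1 ≤ k) {p q : Fin n} (hne : p ≠ q) (hnadj : ¬ (dstar n k i).Adj p q)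
    (hp : p.val = i ∨ p.val = k + i) (hq : q.val = i ∨ q.val = k + i) : False := by
  have hne' : p.val ≠ q.val := fun h => hne (Fin.val_injective h)
  rcases hp with hp | hp <;> rcases hq with hq | hq
  · omega
  · exact hnadj (dstar_center_adj hk hp hq)
  · exact hnadj ((dstar_center_adj hk hq hp).symm)
  · omega

lemma dstar_oppo (hk : 1 ≤ k) {a b c : Fin n} (h1 : (dstar n k i).Adj a b)
    (h2 : (dstar n k i).Adj b c)
    (ha : a.val = i ∨ a.val = k + i) (hc : c.val = i ∨ c.val = k + i)
    (dac : a.val ≠ c.val) : False := by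
  have dab := dstar_ne h1
  have dbc := dstar_ne h2
  rcases ha with ha | ha <;> rcases hc with hc | hc
  · omega
  · have q1 := dstar_nbr_i hk h1 ha
    have q2 := dstar_nbr_ki hk h2.symm hc
    omega
  · have q1 := dstar_nbr_ki hk h1 ha
    have q2 := dstar_nbr_i hk h2.symm hc
    omega
  · omega

section Avoid
variable (hk : 1 ≤ k)
include hk

lemma dstar_avoids_twoK2 (s : Set (Fin n)) :
    IsEmpty (twoK2 ↪g ((dstar n k i).induce s)) := by
  constructor
  intro f
  set G := dstar n k i with hG
  have hadj : ∀ a b : Fin 4, twoK2.Adj a b → G.Adj (f a).val (f b).val := by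
    intro a b h
    have h2 := f.map_rel_iff.mpr h
    simpa using h2
  have hnadj : ∀ a b : Fin 4, ¬ twoK2.Adj a b → ¬ G.Adj (f a).val (f b).val := by
    intro a b h hGadj
    exact h (f.map_rel_iff.mp (by simpa using hGadj))
  have hne : ∀ a b : Fin 4, a ≠ b → (f a : Fin n) ≠ f b := by
    intro a b h heq
    exact h (f.injective (Subtype.ext heq))
  have h01 := hadj 0 1 (by rw [twoK2_adj]; decide)
  have h23 := hadj 2 3 (by rw [twoK2_adj]; decide)
  have n02 := hnadj 0 2 (by rw [twoK2_adj]; decide)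
  have n03 := hnadj 0 3 (by rw [twoK2_adj]; decide)
  have n12 := hnadj 1 2 (by rw [twoK2_adj]; decide)
  have n13 := hnadj 1 3 (by rw [twoK2_adj]; decide)
  have E1 : ∃ p : Fin n, (p = (f 0 : Fin n) ∨ p = (f 1 : Fin n)) ∧
      (p.val = i ∨ p.val = k + i) := by
    rcases dstar_dom h01 with h | h | h | h
    exacts [⟨_, Or.inl rfl, Or.inl h⟩, ⟨_, Or.inl rfl, Or.inr h⟩,
      ⟨_, Or.inr rfl, Or.inl h⟩, ⟨_, Or.inr rfl, Or.inr h⟩]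
  have E2 : ∃ q : Fin n, (q = (f 2 : Fin n) ∨ q = (f 3 : Fin n)) ∧
      (q.val = i ∨ q.val = k + i) := by
    rcases dstar_dom h23 with h | h | h | h
    exacts [⟨_, Or.inl rfl, Or.inl h⟩, ⟨_, Or.inl rfl, Or.inr h⟩,
      ⟨_, Or.inr rfl, Or.inl h⟩, ⟨_, Or.inr rfl, Or.inr h⟩]
  obtain ⟨p, hp, hpc⟩ := E1
  obtain ⟨q, hq, hqc⟩ := E2
  rcases hp with rfl | rfl <;> rcases hq with rfl | rfl
  · exact dstar_cross hk (hne 0 2 (by decide)) n02 hpc hqc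
  · exact dstar_cross hk (hne 0 3 (by decide)) n03 hpc hqc
  · exact dstar_cross hk (hne 1 2 (by decide)) n12 hpc hqc
  · exact dstar_cross hk (hne 1 3 (by decide)) n13 hpc hqc

set_option maxHeartbeats 2000000 in
lemma dstar_avoids_cycleC4 (s : Set (Fin n)) :
    IsEmpty (cycleC4 ↪g ((dstar n k i).induce s)) := by
  constructor
  intro f
  set G := dstar n k i with hG
  have hadj : ∀ a b : Fin 4, cycleC4.Adj a b → G.Adj (f a).val (f b).val := by
    intro a b h
    have h2 := f.map_rel_iff.mpr h
    simpa using h2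
  have hne : ∀ a b : Fin 4, a ≠ b → ((f a : Fin n)).val ≠ (f b : Fin n).val := by
    intro a b h heq
    exact h (f.injective (Subtype.ext (Fin.val_injective heq)))
  have h01 := hadj 0 1 (by rw [cycleC4_adj]; decide)
  have h12 := hadj 1 2 (by rw [cycleC4_adj]; decide)
  have h23 := hadj 2 3 (by rw [cycleC4_adj]; decide)
  have h30 := hadj 3 0 (by rw [cycleC4_adj]; decide)
  have d01 := hne 0 1 (by decide)
  have d02 := hne 0 2 (by decide)
  have d03 := hne 0 3 (by decide)
  have d12 := hne 1 2 (by decide)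
  have d13 := hne 1 3 (by decide)
  have d23 := hne 2 3 (by decide)
  have hcA : ((f 0 : Fin n).val = i ∨ (f 0 : Fin n).val = k + i) ∨
      ((f 1 : Fin n).val = i ∨ (f 1 : Fin n).val = k + i) := by
    rcases dstar_dom h01 with h | h | h | h <;> tauto
  have hcB : ((f 1 : Fin n).val = i ∨ (f 1 : Fin n).val = k + i) ∨
      ((f 2 : Fin n).val = i ∨ (f 2 : Fin n).val = k + i) := by
    rcases dstar_dom h12 with h | h | h | h <;> tauto
  have hcC : ((f 2 : Fin n).val = i ∨ (f 2 : Fin n).val = k + i) ∨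
      ((f 3 : Fin n).val = i ∨ (f 3 : Fin n).val = k + i) := by
    rcases dstar_dom h23 with h | h | h | h <;> tauto
  have hcD : ((f 3 : Fin n).val = i ∨ (f 3 : Fin n).val = k + i) ∨
      ((f 0 : Fin n).val = i ∨ (f 0 : Fin n).val = k + i) := by
    rcases dstar_dom h30 with h | h | h | h <;> tauto
  rcases hcA with hA | hA <;> rcases hcB with hB | hB <;>
    rcases hcC with hC | hC <;> rcases hcD with hD | hD <;>
    first
      | omega
      | exact dstar_oppo hk h01 h12 hA hC d02
      | exact dstar_oppo hk h12 h23 hB hD d13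

end Avoid

/-! ### Counting -/

lemma card_le_of_dom {n : ℕ} {G : SimpleGraph (Fin n)} [Fintype G.edgeSet]
    {col : Fin n → Bool} (hcol : ∀ {u v : Fin n}, G.Adj u v → col u ≠ col v)
    {x y : Fin n} (hxy : G.Adj x y)
    (hdom : ∀ u v : Fin n, G.Adj u v → u = x ∨ u = y ∨ v = x ∨ v = y) :
    G.edgeFinset.card ≤ n - 1 := by
  classical
  set g : Fin n → Fin n → Fin n := fun u v =>
    if u = x ∨ u = y then (if v = x ∨ v = y then x else v)
    else (if v = x ∨ v = y then u else x) with hg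
  have hcomm : ∀ u v, g u v = g v u := by
    intro u v
    by_cases h1 : u = x ∨ u = y <;> by_cases h2 : v = x ∨ v = y <;> simp [hg, h1, h2]
  set f : Sym2 (Fin n) → Fin n := Sym2.lift ⟨g, hcomm⟩ with hf
  have claimA : ∀ u v : Fin n, G.Adj u v →
      (f s(u, v) = x ∧ s(u, v) = s(x, y)) ∨
      (f s(u, v) ≠ x ∧ f s(u, v) ≠ y ∧
        (s(u, v) = s(x, f s(u, v)) ∨ s(u, v) = s(y, f s(u, v)))) := by
    intro u v huv
    have hlift : f s(u, v) = g u v := rfl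
    by_cases h1 : u = x ∨ u = y <;> by_cases h2 : v = x ∨ v = y
    · left
      have hg1 : g u v = x := by simp [hg, h1, h2]
      refine ⟨hlift.trans hg1, ?_⟩
      rcases h1 with rfl | rfl <;> rcases h2 with rfl | rfl
      · exact absurd rfl huv.ne
      · rfl
      · exact Sym2.eq_swap
      · exact absurd rfl huv.ne
    · right
      have hg1 : g u v = v := by simp [hg, h1, h2]
      rw [hlift, hg1]
      push_neg at h2
      refine ⟨h2.1, h2.2, ?_⟩
      rcases h1 with rfl | rfl
      · exact Or.inl rfl
      · exact Or.inr rfl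
    · right
      have hg1 : g u v = u := by simp [hg, h1, h2]
      rw [hlift, hg1]
      push_neg at h1
      refine ⟨h1.1, h1.2, ?_⟩
      rcases h2 with rfl | rfl
      · exact Or.inl Sym2.eq_swap
      · exact Or.inr Sym2.eq_swap
    · exfalso
      rcases hdom u v huv with h | h | h | h <;> tauto
  have hxyne : x ≠ y := hxy.ne
  have hmaps : ∀ e ∈ G.edgeFinset, f e ∈ Finset.univ.erase y := by
    intro e he
    induction e using Sym2.ind with
    | _ u v =>
      rw [mem_edgeFinset, mem_edgeSet] at he
      rcases claimA u v he with ⟨h1, -⟩ | ⟨-, h2, -⟩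
      · rw [h1]; exact Finset.mem_erase.mpr ⟨hxyne, Finset.mem_univ _⟩
      · exact Finset.mem_erase.mpr ⟨h2, Finset.mem_univ _⟩
  have hinj : Set.InjOn f G.edgeFinset := by
    intro e1 he1 e2 he2 hfe
    simp only [coe_edgeFinset] at he1 he2
    induction e1 using Sym2.ind with
    | _ u1 v1 =>
      induction e2 using Sym2.ind with
      | _ u2 v2 =>
        rw [mem_edgeSet] at he1 he2
        rcases claimA u1 v1 he1 with ⟨p1, q1⟩ | ⟨p1, p1', q1⟩ <;>
          rcases claimA u2 v2 he2 with ⟨p2, q2⟩ | ⟨p2, p2', q2⟩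
        · rw [q1, q2]
        · exact absurd (hfe ▸ p1) p2
        · exact absurd (hfe.symm ▸ p2) p1
        · rcases q1 with q1 | q1 <;> rcases q2 with q2 | q2
          · rw [q1, q2, hfe]
          · exfalso
            have hxw : G.Adj x (f s(u1, v1)) := by rw [← mem_edgeSet, ← q1]; exact he1
            have hyw : G.Adj y (f s(u1, v1)) := by
              rw [← mem_edgeSet, hfe, ← q2]; exact he2
            exact hcol hxy (boolEq (hcol hxw) (hcol hyw))
          · exfalso
            have hxw : G.Adj x (f s(u1, v1)) := by
              rw [← mem_edgeSet, hfe, ← q2]; exact he2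
            have hyw : G.Adj y (f s(u1, v1)) := by rw [← mem_edgeSet, ← q1]; exact he1
            exact hcol hxy (boolEq (hcol hxw) (hcol hyw))
          · rw [q1, q2, hfe]
  calc G.edgeFinset.card ≤ (Finset.univ.erase y).card :=
        Finset.card_le_card_of_injOn f hmaps hinj
    _ = n - 1 := by
        rw [Finset.card_erase_of_mem (Finset.mem_univ _), Finset.card_univ, Fintype.card_fin]

lemma avoids_factor {α : Type} (G : SimpleGraph α) (H : SimpleGraph (Fin 4))
    (hH : ∀ v : Fin 4, ∃ w, H.Adj v w)
    (hav : IsEmpty (H ↪g G.induce G.support)) : IsEmpty (H ↪g G) := by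
  constructor
  intro f
  apply hav.false
  refine ⟨⟨fun v => ⟨f v, ?_⟩, ?_⟩, ?_⟩
  · obtain ⟨w, hw⟩ := hH v
    exact (SimpleGraph.mem_support G).mpr ⟨f w, f.map_rel_iff.mpr hw⟩
  · intro a b hab
    exact f.injective (congrArg Subtype.val hab)
  · intro a b
    constructor
    · intro h
      exact f.map_rel_iff.mp (by simpa using (show G.Adj (f a) (f b) from h))
    · intro h
      have h2 := f.map_rel_iff.mpr h
      exact h2

lemma fin2bool : ∀ x y : Fin 2, x ≠ y → decide (x = 1) ≠ decide (y = 1) := by decide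

/-- A connected bipartite graph (with an edge) avoiding induced `2K₂` and `C₄`
is a double star; consequently `χ'_{2K₂,C₄}(n) = ⌈n/2⌉`. -/
theorem doubleStar_and_chi :
    (∀ (V : Type) (G : SimpleGraph V) (c : V → Bool),
      (∀ {u v : V}, G.Adj u v → c u ≠ c v) → G.Connected →
      IsEmpty (twoK2 ↪g G) → IsEmpty (cycleC4 ↪g G) →
      (∃ u v, G.Adj u v) →
      ∃ x y : V, G.Adj x y ∧
        ∀ u v : V, G.Adj u v → u = x ∨ u = y ∨ v = x ∨ v = y) ∧
    (∀ n : ℕ, 2 ≤ n → chiDoubleStar n = (n + 1) / 2) := by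
  constructor
  · intro V G c hc _hconn h2 h4 ⟨u, v, huv⟩
    exact domEdge hc h2 h4 huv
  · intro n hn
    set k := (n + 1) / 2 with hkdef
    have hk1 : 1 ≤ k := by omega
    have hkn : n ≤ 2 * k := by omega
    have hmem : k ∈ {m | ∃ P : Fin m → SimpleGraph (Fin n),
        IsBipartitePartition n m P ∧ ∀ i, Avoids (P i) twoK2 ∧ Avoids (P i) cycleC4} := by
      refine ⟨fun i => dstar n k i.val, ⟨fun i => dstar_colorable hk1, ?_⟩, ?_⟩
      · intro e he
        induction e using Sym2.ind with
        | _ u v =>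
          rw [mem_edgeSet, top_adj] at he
          have hval : u.val ≠ v.val := fun h => he (Fin.val_injective h)
          refine ⟨⟨partFn k u.val v.val, partFn_lt hkn hval⟩, ?_, ?_⟩
          · simp only [mem_edgeSet]
            exact (dstar_adj_iff hkn (partFn_lt hkn hval) hval).mpr rfl
          · intro j hj
            simp only [mem_edgeSet] at hj
            exact Fin.ext ((dstar_adj_iff hkn j.isLt hval).mp hj)
      · intro i
        exact ⟨dstar_avoids_twoK2 hk1 _, dstar_avoids_cycleC4 hk1 _⟩
    unfold chiDoubleStar
    apply le_antisymm
    · exact Nat.sInf_le hmem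
    · apply le_csInf ⟨k, hmem⟩
      rintro m ⟨P, ⟨hcolor, hcover⟩, havoid⟩
      classical
      have hcard : ∀ i, (P i).edgeFinset.card ≤ n - 1 := by
        intro i
        rcases Finset.eq_empty_or_nonempty (P i).edgeFinset with hE | hE
        · rw [hE]; simp
        · obtain ⟨e, he⟩ := hE
          have hedge : ∃ a b : Fin n, (P i).Adj a b := by
            induction e using Sym2.ind with
            | _ a b =>
              rw [mem_edgeFinset, mem_edgeSet] at he
              exact ⟨a, b, he⟩
          obtain ⟨a, b, hab⟩ := hedge
          obtain ⟨co⟩ := hcolor i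
          have hcol : ∀ {u v : Fin n}, (P i).Adj u v →
              (fun w => decide (co w = 1)) u ≠ (fun w => decide (co w = 1)) v := by
            intro u v h
            exact fin2bool _ _ (co.valid h)
          have h2 : IsEmpty (twoK2 ↪g P i) := by
            apply avoids_factor _ _ ?_ (havoid i).1
            intro v
            fin_cases v
            · exact ⟨1, by rw [twoK2_adj]; decide⟩
            · exact ⟨0, by rw [twoK2_adj]; decide⟩
            · exact ⟨3, by rw [twoK2_adj]; decide⟩
            · exact ⟨2, by rw [twoK2_adj]; decide⟩
          have h4 : IsEmpty (cycleC4 ↪g P i) := by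
            apply avoids_factor _ _ ?_ (havoid i).2
            intro v
            fin_cases v
            · exact ⟨1, by rw [cycleC4_adj]; decide⟩
            · exact ⟨2, by rw [cycleC4_adj]; decide⟩
            · exact ⟨3, by rw [cycleC4_adj]; decide⟩
            · exact ⟨0, by rw [cycleC4_adj]; decide⟩
          obtain ⟨x, y, hxy, hdom⟩ := domEdge hcol h2 h4 hab
          exact card_le_of_dom hcol hxy hdom
      have hsub : ∀ j, (P j).edgeFinset ⊆ (⊤ : SimpleGraph (Fin n)).edgeFinset := by
        intro j e he
        rw [mem_edgeFinset] at he ⊢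
        exact edgeSet_mono le_top he
      have hcoverF : (⊤ : SimpleGraph (Fin n)).edgeFinset =
          Finset.univ.biUnion (fun j => (P j).edgeFinset) := by
        ext e
        simp only [Finset.mem_biUnion, Finset.mem_univ, true_and]
        constructor
        · intro he
          obtain ⟨j, hj, -⟩ := hcover e (mem_edgeFinset.mp he)
          exact ⟨j, mem_edgeFinset.mpr hj⟩
        · rintro ⟨j, hj⟩
          exact hsub j hj
      have hdisj : ∀ a ∈ (Finset.univ : Finset (Fin m)), ∀ b ∈ Finset.univ, a ≠ b →
          Disjoint (P a).edgeFinset (P b).edgeFinset := by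
        intro a _ b _ hab
        rw [Finset.disjoint_left]
        intro e hea heb
        obtain ⟨j, -, hj⟩ := hcover e (mem_edgeFinset.mp (hsub a hea))
        exact hab ((hj a (mem_edgeFinset.mp hea)).trans (hj b (mem_edgeFinset.mp heb)).symm)
      have hcount : (⊤ : SimpleGraph (Fin n)).edgeFinset.card ≤ m * (n - 1) := by
        rw [hcoverF, Finset.card_biUnion hdisj]
        calc ∑ j, (P j).edgeFinset.card ≤ ∑ _j : Fin m, (n - 1) :=
              Finset.sum_le_sum (fun j _ => hcard j)
          _ = m * (n - 1) := by rw [Finset.sum_const, Finset.card_univ, Fintype.card_fin,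
              smul_eq_mul]
      have htop : (⊤ : SimpleGraph (Fin n)).edgeFinset.card = n * (n - 1) / 2 := by
        rw [card_edgeFinset_top_eq_card_choose_two, Fintype.card_fin, Nat.choose_two_right]
      rw [htop] at hcount
      have heven : 2 ∣ n * (n - 1) := by
        rcases Nat.even_or_odd n with h | h
        · exact Dvd.dvd.mul_right h.two_dvd _
        · have he2 : Even (n - 1) := by
            rcases h with ⟨t, ht⟩
            exact ⟨t, by omega⟩
          exact Dvd.dvd.mul_left he2.two_dvd _
      have hfull : n * (n - 1) ≤ 2 * m * (n - 1) := by
        have h1 : n * (n - 1) / 2 * 2 = n * (n - 1) := Nat.div_mul_cancel heven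
        have h2 : n * (n - 1) / 2 * 2 ≤ m * (n - 1) * 2 := Nat.mul_le_mul_right _ hcount
        calc n * (n - 1) = n * (n - 1) / 2 * 2 := h1.symm
          _ ≤ m * (n - 1) * 2 := h2
          _ = 2 * m * (n - 1) := by ring
      have hnm : n ≤ 2 * m := Nat.le_of_mul_le_mul_right hfull (by omega)
      omega
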